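/- For every M ∈ SL(2, ℂ) and every Hermitian matrix H ∈ M₂(ℂ), one has σ_M(α_H) = α_{Mᴴ H M}, where Mᴴ is the conjugate transpose; in particular the set of translations is invariant under every σ_M, and consequently the set of BMS transformations whose data is of the form (±1, α_H) (the translation subgroup 𝓣) is a normal subgroup of the BMS group 𝓑. -/

import Mathlib

noncomputable section

open Matrix

/-- `SL(2, ℂ)`. -/
abbrev SL2C := Matrix.SpecialLinearGroup (Fin 2) ℂ

/-- The complex projective line `ℙ¹(ℂ)`, the projectivization of `ℂ²`. -/
abbrev P1C := Projectivization ℂ (Fin 2 → ℂ)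

instance : Fact (Even (Fintype.card (Fin 2))) := ⟨⟨1, rfl⟩⟩

/-- The squared standard Hermitian norm `‖v‖²` of `v ∈ ℂ²`. -/
def hermNormSq (v : Fin 2 → ℂ) : ℝ := (star v ⬝ᵥ v).re

theorem SL2C.mulVec_ne_zero (M : SL2C) {v : Fin 2 → ℂ} (hv : v ≠ 0) :
    (M : Matrix (Fin 2) (Fin 2) ℂ).mulVec v ≠ 0 := by
  intro h
  apply hv
  have hMM : ((M⁻¹ : SL2C) : Matrix (Fin 2) (Fin 2) ℂ) * (M : Matrix (Fin 2) (Fin 2) ℂ) = 1 := by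
    rw [← Matrix.SpecialLinearGroup.coe_mul, inv_mul_cancel,
      Matrix.SpecialLinearGroup.coe_one]
  calc v = (((M⁻¹ : SL2C) : Matrix (Fin 2) (Fin 2) ℂ) *
          (M : Matrix (Fin 2) (Fin 2) ℂ)).mulVec v := by rw [hMM, Matrix.one_mulVec]
    _ = ((M⁻¹ : SL2C) : Matrix (Fin 2) (Fin 2) ℂ).mulVec
          ((M : Matrix (Fin 2) (Fin 2) ℂ).mulVec v) := by rw [Matrix.mulVec_mulVec]
    _ = 0 := by rw [h, Matrix.mulVec_zero]

/-- The action of `SL(2, ℂ)` on `ℙ¹(ℂ)`: `M • [v] = [M v]`. -/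
def mobAct (M : SL2C) (p : P1C) : P1C :=
  Projectivization.mk ℂ ((M : Matrix (Fin 2) (Fin 2) ℂ).mulVec p.rep)
    (SL2C.mulVec_ne_zero M p.rep_nonzero)

/-- The conformal factor `K_M : ℙ¹(ℂ) → ℝ`, `K_M([v]) = ‖v‖² / ‖M v‖²`. -/
def Kconf (M : SL2C) (p : P1C) : ℝ :=
  hermNormSq p.rep / hermNormSq ((M : Matrix (Fin 2) (Fin 2) ℂ).mulVec p.rep)

/-- The BMS transformation with data `(M, α)`:
`(p, u) ↦ (M • p, K_M(p)·(u + α(p)))`. -/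
def bms (M : SL2C) (α : P1C → ℝ) : P1C × ℝ → P1C × ℝ :=
  fun q => (mobAct M q.1, Kconf M q.1 * (q.2 + α q.1))

/-- `σ_M(α)(p) = K_M(p)⁻¹ · α(M • p)`. -/
def sigmaAct (M : SL2C) (α : P1C → ℝ) : P1C → ℝ :=
  fun p => (Kconf M p)⁻¹ * α (mobAct M p)

/-- The BMS group `𝓑`, as the set of all BMS transformations. -/
def BMSSet : Set ((P1C × ℝ) → (P1C × ℝ)) := {f | ∃ M α, f = bms M α}

/-- The supertranslations `𝓢`: BMS transformations with data `(1, α)`. -/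
def Supertranslations : Set ((P1C × ℝ) → (P1C × ℝ)) := {f | ∃ α, f = bms 1 α}

/-- The 'Lorentz' elements `𝓛`: BMS transformations with data `(M, 0)`. -/
def LorentzSet : Set ((P1C × ℝ) → (P1C × ℝ)) := {f | ∃ M, f = bms M 0}

/-- The translation function `α_H([v]) = (vᴴ H v)/‖v‖²` attached to a Hermitian matrix `H`. -/
def transl (H : Matrix (Fin 2) (Fin 2) ℂ) : P1C → ℝ :=
  fun p => (star p.rep ⬝ᵥ H.mulVec p.rep).re / hermNormSq p.rep

/-- `α : ℙ¹(ℂ) → ℝ` is a translation if `α = α_H` for some Hermitian `H`. -/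
def IsTranslationFn (α : P1C → ℝ) : Prop :=
  ∃ H : Matrix (Fin 2) (Fin 2) ℂ, H.IsHermitian ∧ α = transl H

/-- The translation subgroup `𝓣`: BMS transformations with data `(±1, α_H)`. -/
def TranslSet : Set ((P1C × ℝ) → (P1C × ℝ)) :=
  {f | ∃ (M : SL2C) (α : P1C → ℝ), (M = 1 ∨ M = -1) ∧ IsTranslationFn α ∧ f = bms M α}

/-- `PSL(2, ℂ)`, the quotient of `SL(2, ℂ)` by its center `{1, -1}`. -/
abbrev PSL2C := SL2C ⧸ Subgroup.center SL2C

/-- The good cut of a translation: the graph of `α_H` in `ℙ¹(ℂ) × ℝ`. -/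
def goodCut (H : Matrix (Fin 2) (Fin 2) ℂ) : Set (P1C × ℝ) :=
  {q | q.2 = transl H q.1}


section AuxLemmas

open Complex

lemma quad_smul (A : Matrix (Fin 2) (Fin 2) ℂ) (c : ℂ) (v : Fin 2 → ℂ) :
    star (c • v) ⬝ᵥ A.mulVec (c • v) = (Complex.normSq c : ℂ) * (star v ⬝ᵥ A.mulVec v) := by
  rw [Matrix.mulVec_smul, star_smul, smul_dotProduct, dotProduct_smul, smul_eq_mul,
    smul_eq_mul, Complex.normSq_eq_conj_mul_self, Complex.star_def]
  ring

lemma dot_smul_self (c : ℂ) (v : Fin 2 → ℂ) :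
    star (c • v) ⬝ᵥ (c • v) = (Complex.normSq c : ℂ) * (star v ⬝ᵥ v) := by
  rw [star_smul, smul_dotProduct, dotProduct_smul, smul_eq_mul, smul_eq_mul,
    Complex.normSq_eq_conj_mul_self, Complex.star_def]
  ring

lemma hermNormSq_smul (c : ℂ) (v : Fin 2 → ℂ) :
    hermNormSq (c • v) = Complex.normSq c * hermNormSq v := by
  unfold hermNormSq
  rw [dot_smul_self, Complex.re_ofReal_mul]

lemma hermNormSq_pos {v : Fin 2 → ℂ} (hv : v ≠ 0) : 0 < hermNormSq v := by
  have h0 : v 0 ≠ 0 ∨ v 1 ≠ 0 := by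
    by_contra h
    push_neg at h
    exact hv (funext fun i => by fin_cases i <;> simp [h.1, h.2])
  have he : hermNormSq v = Complex.normSq (v 0) + Complex.normSq (v 1) := by
    simp [hermNormSq, dotProduct, Fin.sum_univ_two, Complex.normSq_apply,
      Complex.mul_re, Complex.star_def]
  rw [he]
  rcases h0 with h | h
  · have h1 := Complex.normSq_pos.2 h
    have h2 := Complex.normSq_nonneg (v 1)
    linarith
  · have h1 := Complex.normSq_pos.2 h
    have h2 := Complex.normSq_nonneg (v 0)
    linarith

lemma hermNormSq_ne {v : Fin 2 → ℂ} (hv : v ≠ 0) : hermNormSq v ≠ 0 :=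
  ne_of_gt (hermNormSq_pos hv)

lemma exists_rep_smul {w : Fin 2 → ℂ} (hw : w ≠ 0) :
    ∃ c : ℂ, c ≠ 0 ∧ (Projectivization.mk ℂ w hw).rep = c • w := by
  obtain ⟨a, ha⟩ := Projectivization.exists_smul_eq_mk_rep ℂ w hw
  exact ⟨(a : ℂ), a.ne_zero, by rw [← ha]; rfl⟩

lemma transl_mk (H : Matrix (Fin 2) (Fin 2) ℂ) {w : Fin 2 → ℂ} (hw : w ≠ 0) :
    transl H (Projectivization.mk ℂ w hw) = (star w ⬝ᵥ H.mulVec w).re / hermNormSq w := by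
  obtain ⟨c, hc0, hc⟩ := exists_rep_smul hw
  unfold transl
  rw [hc, quad_smul, hermNormSq_smul, Complex.re_ofReal_mul,
    mul_div_mul_left _ _ (Complex.normSq_pos.2 hc0).ne']

lemma Kconf_mk (M : SL2C) {w : Fin 2 → ℂ} (hw : w ≠ 0) :
    Kconf M (Projectivization.mk ℂ w hw)
      = hermNormSq w / hermNormSq ((M : Matrix (Fin 2) (Fin 2) ℂ).mulVec w) := by
  obtain ⟨c, hc0, hc⟩ := exists_rep_smul hw
  unfold Kconf
  rw [hc, Matrix.mulVec_smul, hermNormSq_smul, hermNormSq_smul,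
    mul_div_mul_left _ _ (Complex.normSq_pos.2 hc0).ne']

lemma mobAct_mk (M : SL2C) {w : Fin 2 → ℂ} (hw : w ≠ 0) :
    mobAct M (Projectivization.mk ℂ w hw)
      = Projectivization.mk ℂ ((M : Matrix (Fin 2) (Fin 2) ℂ).mulVec w)
          (SL2C.mulVec_ne_zero M hw) := by
  obtain ⟨c, hc0, hc⟩ := exists_rep_smul hw
  unfold mobAct
  rw [Projectivization.mk_eq_mk_iff]
  exact ⟨Units.mk0 c hc0, by simp [hc, Matrix.mulVec_smul, Units.smul_def]; exact ⟨by ring, by ring⟩⟩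

lemma mobAct_mul (M M' : SL2C) (p : P1C) :
    mobAct M (mobAct M' p) = mobAct (M * M') p := by
  show mobAct M (Projectivization.mk ℂ _ _) = _
  rw [mobAct_mk]
  unfold mobAct
  rw [Projectivization.mk_eq_mk_iff]
  exact ⟨1, by simp only [one_smul, Matrix.SpecialLinearGroup.coe_mul, Matrix.mulVec_mulVec]⟩

lemma mobAct_one (p : P1C) : mobAct (1 : SL2C) p = p := by
  unfold mobAct
  conv_rhs => rw [← Projectivization.mk_rep p]
  rw [Projectivization.mk_eq_mk_iff]
  exact ⟨1, by simp⟩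

lemma Kconf_one (p : P1C) : Kconf (1 : SL2C) p = 1 := by
  unfold Kconf
  rw [Matrix.SpecialLinearGroup.coe_one, Matrix.one_mulVec]
  exact div_self (hermNormSq_ne p.rep_nonzero)

lemma sigma_one (α : P1C → ℝ) : sigmaAct 1 α = α := by
  funext p
  unfold sigmaAct
  rw [Kconf_one, mobAct_one, inv_one, one_mul]

lemma bms_one_zero : bms 1 (fun _ => (0 : ℝ)) = id := by
  funext q
  simp [bms, mobAct_one, Kconf_one]

lemma Kconf_comp (M M' : SL2C) (p : P1C) :
    Kconf M (mobAct M' p) * Kconf M' p = Kconf (M * M') p := by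
  have hv := p.rep_nonzero
  have hMv := SL2C.mulVec_ne_zero M' hv
  have hMMv := SL2C.mulVec_ne_zero M hMv
  show Kconf M (Projectivization.mk ℂ _ _) * _ = _
  rw [Kconf_mk M hMv]
  unfold Kconf
  rw [Matrix.SpecialLinearGroup.coe_mul, ← Matrix.mulVec_mulVec]
  have ha := hermNormSq_ne hv
  have hb := hermNormSq_ne hMv
  have hc : hermNormSq (((M : Matrix (Fin 2) (Fin 2) ℂ)
      * (M' : Matrix (Fin 2) (Fin 2) ℂ)) *ᵥ p.rep) ≠ 0 := by
    rw [← Matrix.mulVec_mulVec]; exact hermNormSq_ne hMMv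
  field_simp

lemma bms_comp (M M' : SL2C) (α α' : P1C → ℝ) :
    bms M α ∘ bms M' α' = bms (M * M') (fun p => α' p + sigmaAct M' α p) := by
  funext q
  obtain ⟨p, u⟩ := q
  have hv := p.rep_nonzero
  have hMv := SL2C.mulVec_ne_zero M' hv
  refine Prod.ext (mobAct_mul M M' p) ?_
  show Kconf M (mobAct M' p) * (Kconf M' p * (u + α' p) + α (mobAct M' p))
      = Kconf (M * M') p * (u + (α' p + sigmaAct M' α p))
  have hK := Kconf_comp M M' p
  have hK' : Kconf M' p ≠ 0 := by
    unfold Kconf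
    exact div_ne_zero (hermNormSq_ne hv) (hermNormSq_ne hMv)
  unfold sigmaAct
  have hinv : Kconf M' p * (Kconf M' p)⁻¹ = 1 := mul_inv_cancel₀ hK'
  rw [← hK]
  linear_combination (-(Kconf M (mobAct M' p) * α (mobAct M' p))) * hinv

lemma sigmaAct_comp (M N : SL2C) (α : P1C → ℝ) :
    sigmaAct M (sigmaAct N α) = sigmaAct (N * M) α := by
  funext p
  unfold sigmaAct
  rw [mobAct_mul, ← Kconf_comp N M p, mul_inv]
  ring

lemma bms_left_inv (M : SL2C) (β : P1C → ℝ) :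
    bms M⁻¹ (sigmaAct M⁻¹ (fun p => -β p)) ∘ bms M β = id := by
  rw [bms_comp, inv_mul_cancel]
  have h : (fun p => β p + sigmaAct M (sigmaAct M⁻¹ (fun p => -β p)) p)
      = fun _ => (0 : ℝ) := by
    funext p
    rw [sigmaAct_comp, inv_mul_cancel, sigma_one]
    ring
  rw [h, bms_one_zero]

lemma bms_right_inv (M : SL2C) (β : P1C → ℝ) :
    bms M β ∘ bms M⁻¹ (sigmaAct M⁻¹ (fun p => -β p)) = id := by
  rw [bms_comp, mul_inv_cancel]
  have h : (fun p => sigmaAct M⁻¹ (fun q => -β q) p + sigmaAct M⁻¹ β p)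
      = fun _ => (0 : ℝ) := by
    funext p
    unfold sigmaAct
    ring
  rw [h, bms_one_zero]

lemma mobAct_neg (M : SL2C) (p : P1C) : mobAct (-M) p = mobAct M p := by
  unfold mobAct
  rw [Projectivization.mk_eq_mk_iff]
  exact ⟨-1, by simp [Matrix.SpecialLinearGroup.coe_neg, Matrix.neg_mulVec, Units.smul_def]; exact ⟨by ring, by ring⟩⟩

lemma hermNormSq_neg (v : Fin 2 → ℂ) : hermNormSq (-v) = hermNormSq v := by
  have := hermNormSq_smul (-1) v
  simpa using this

lemma Kconf_neg (M : SL2C) (p : P1C) : Kconf (-M) p = Kconf M p := by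
  unfold Kconf
  rw [Matrix.SpecialLinearGroup.coe_neg, Matrix.neg_mulVec, hermNormSq_neg]

lemma bms_neg (M : SL2C) (α : P1C → ℝ) : bms (-M) α = bms M α := by
  funext q
  simp [bms, mobAct_neg, Kconf_neg]

lemma sigma_transl (M : SL2C) (H : Matrix (Fin 2) (Fin 2) ℂ) :
    sigmaAct M (transl H) =
      transl ((M : Matrix (Fin 2) (Fin 2) ℂ)ᴴ * H * (M : Matrix (Fin 2) (Fin 2) ℂ)) := by
  funext p
  have hv := p.rep_nonzero
  have hMv := SL2C.mulVec_ne_zero M hv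
  unfold sigmaAct
  show _ * transl H (Projectivization.mk ℂ _ _) = _
  rw [transl_mk H hMv]
  unfold Kconf transl
  have key : star ((M : Matrix (Fin 2) (Fin 2) ℂ).mulVec p.rep)
        ⬝ᵥ H.mulVec ((M : Matrix (Fin 2) (Fin 2) ℂ).mulVec p.rep)
      = star p.rep ⬝ᵥ ((M : Matrix (Fin 2) (Fin 2) ℂ)ᴴ * H
          * (M : Matrix (Fin 2) (Fin 2) ℂ)).mulVec p.rep := by
    conv_rhs => rw [← Matrix.mulVec_mulVec, ← Matrix.mulVec_mulVec,
      Matrix.dotProduct_mulVec, ← Matrix.star_mulVec]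
  rw [key]
  have ha := hermNormSq_ne hv
  have hb := hermNormSq_ne hMv
  field_simp

lemma isTransl_sigma (M : SL2C) {α : P1C → ℝ} (h : IsTranslationFn α) :
    IsTranslationFn (sigmaAct M α) := by
  obtain ⟨H, hH, rfl⟩ := h
  exact ⟨_, Matrix.isHermitian_conjTranspose_mul_mul _ hH, sigma_transl M H⟩

lemma isTransl_add {α β : P1C → ℝ} (hα : IsTranslationFn α) (hβ : IsTranslationFn β) :
    IsTranslationFn (fun p => α p + β p) := by
  obtain ⟨H, hH, rfl⟩ := hα
  obtain ⟨H', hH', rfl⟩ := hβ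
  refine ⟨H + H', hH.add hH', funext fun p => ?_⟩
  unfold transl
  rw [Matrix.add_mulVec, dotProduct_add, Complex.add_re, add_div]

lemma isTransl_neg {α : P1C → ℝ} (hα : IsTranslationFn α) :
    IsTranslationFn (fun p => -α p) := by
  obtain ⟨H, hH, rfl⟩ := hα
  refine ⟨-H, hH.neg, funext fun p => ?_⟩
  unfold transl
  rw [Matrix.neg_mulVec, dotProduct_neg, Complex.neg_re, neg_div]

lemma transl_zero : transl 0 = fun _ => (0 : ℝ) := by
  funext p
  unfold transl
  rw [Matrix.zero_mulVec, dotProduct_zero, Complex.zero_re, zero_div]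

lemma isTransl_zero : IsTranslationFn (fun _ => (0 : ℝ)) :=
  ⟨0, Matrix.isHermitian_zero, transl_zero.symm⟩

lemma bms_pm_one {M : SL2C} (hM : M = 1 ∨ M = -1) (α : P1C → ℝ) :
    bms M α = bms 1 α := by
  rcases hM with rfl | rfl
  · rfl
  · exact bms_neg 1 α

end AuxLemmas

/-- `σ_M(α_H) = α_{Mᴴ H M}` for every `M ∈ SL(2, ℂ)` and Hermitian `H`; in particular
the set of translations is invariant under every `σ_M`, and consequently the translation
subgroup `𝓣` (BMS transformations with data `(±1, α_H)`) is a normal subgroup of `𝓑`. -/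
theorem sigma_transl_and_translations_normal :
    (∀ (M : SL2C) (H : Matrix (Fin 2) (Fin 2) ℂ), H.IsHermitian →
      sigmaAct M (transl H) =
        transl ((M : Matrix (Fin 2) (Fin 2) ℂ)ᴴ * H * (M : Matrix (Fin 2) (Fin 2) ℂ))) ∧
    (∀ (M : SL2C) (α : P1C → ℝ), IsTranslationFn α → IsTranslationFn (sigmaAct M α)) ∧
    (id ∈ TranslSet) ∧
    (∀ t ∈ TranslSet, ∀ t' ∈ TranslSet, t ∘ t' ∈ TranslSet) ∧
    (∀ t ∈ TranslSet, ∃ t' ∈ TranslSet, t' ∘ t = id ∧ t ∘ t' = id) ∧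
    (∀ b ∈ BMSSet, ∀ t ∈ TranslSet, ∀ binv : P1C × ℝ → P1C × ℝ,
      binv ∘ b = id → b ∘ binv = id → b ∘ t ∘ binv ∈ TranslSet) := by
  have part1 : ∀ (M : SL2C) (H : Matrix (Fin 2) (Fin 2) ℂ),
      sigmaAct M (transl H) =
        transl ((M : Matrix (Fin 2) (Fin 2) ℂ)ᴴ * H * (M : Matrix (Fin 2) (Fin 2) ℂ)) :=
    fun M H => sigma_transl M H
  refine ⟨fun M H _ => part1 M H, fun M α h => isTransl_sigma M h, ?_, ?_, ?_, ?_⟩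
  · exact ⟨1, fun _ => 0, Or.inl rfl, isTransl_zero, bms_one_zero.symm⟩
  · rintro t ⟨M, α, hM, hα, rfl⟩ t' ⟨M', α', hM', hα', rfl⟩
    rw [bms_pm_one hM, bms_pm_one hM', bms_comp, one_mul, sigma_one]
    exact ⟨1, _, Or.inl rfl, isTransl_add hα' hα, rfl⟩
  · rintro t ⟨M, α, hM, hα, rfl⟩
    rw [bms_pm_one hM]
    refine ⟨bms 1⁻¹ (sigmaAct 1⁻¹ (fun p => -α p)), ?_, bms_left_inv 1 α, bms_right_inv 1 α⟩
    refine ⟨1⁻¹, _, Or.inl inv_one, ?_, rfl⟩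
    rw [inv_one, sigma_one]
    exact isTransl_neg hα
  · rintro b ⟨M, β, rfl⟩ t ⟨N, α, hN, hα, rfl⟩ binv h1 h2
    have hbinv : binv = bms M⁻¹ (sigmaAct M⁻¹ (fun p => -β p)) := by
      have hc := bms_right_inv M β
      calc binv = binv ∘ (bms M β ∘ bms M⁻¹ (sigmaAct M⁻¹ (fun p => -β p))) := by
            rw [hc]; rfl
        _ = (binv ∘ bms M β) ∘ bms M⁻¹ (sigmaAct M⁻¹ (fun p => -β p)) := rfl
        _ = bms M⁻¹ (sigmaAct M⁻¹ (fun p => -β p)) := by rw [h1]; rfl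
    rw [hbinv, bms_pm_one hN, bms_comp, one_mul, bms_comp, mul_inv_cancel]
    have hfun : (fun p => (sigmaAct M⁻¹ (fun q => -β q) p + sigmaAct M⁻¹ α p)
        + sigmaAct M⁻¹ β p) = sigmaAct M⁻¹ α := by
      funext p
      unfold sigmaAct
      ring
    rw [hfun]
    exact ⟨1, sigmaAct M⁻¹ α, Or.inl rfl, isTransl_sigma M⁻¹ hα, rfl⟩
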